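/- Let δ > 0, T > 0, and let M, N : [0,T) → ℝ be differentiable with N(t) > 0, M'(t) ≤ −M(t)² + δN(t), and N'(t) = −M(t)N(t) for all t ∈ [0,T). Assume M(0) < −√(2δN(0)), and set T₁ = −(M(0)+√(M(0)²−2δN(0)))/(δN(0)). Then every t ∈ [0,T) satisfies t < T₁; in particular T ≤ T₁, i.e. the solution cannot exist beyond time T₁. -/

import Mathlib

open Set

lemma riccati_aux_antitone {T : ℝ} (hT : 0 < T) (f f' : ℝ → ℝ)
    (hf : ∀ t ∈ Ico (0:ℝ) T, HasDerivAt f (f' t) t)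
    (hf0 : ∀ t ∈ Ico (0:ℝ) T, f' t ≤ 0) :
    ∀ t ∈ Ico (0:ℝ) T, f t ≤ f 0 := by
  have hA : AntitoneOn f (Ico (0:ℝ) T) := by
    apply antitoneOn_of_deriv_nonpos (convex_Ico _ _)
    · exact fun t ht => (hf t ht).continuousAt.continuousWithinAt
    · intro x hx
      rw [interior_Ico] at hx
      exact ((hf x (Ioo_subset_Ico_self hx)).differentiableAt).differentiableWithinAt
    · intro x hx
      rw [interior_Ico] at hx
      rw [(hf x (Ioo_subset_Ico_self hx)).deriv]
      exact hf0 x (Ioo_subset_Ico_self hx)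
  intro t ht
  exact hA ⟨le_refl 0, hT⟩ ht ht.1

/-- Finite-time blow-up: if `N > 0`, `M' ≤ -M² + δN`, `N' = -MN` on `[0,T)` and
`M(0) < -√(2δN(0))`, then with
`T₁ = -(M(0) + √(M(0)² - 2δN(0)))/(δN(0))` every `t ∈ [0,T)` satisfies
`t < T₁`; in particular `T ≤ T₁`, i.e. the solution cannot exist beyond `T₁`. -/
theorem riccati_blow_up_time_bound (δ T T₁ : ℝ) (hδ : 0 < δ) (hT : 0 < T)
    (M N M' : ℝ → ℝ)
    (hNpos : ∀ t ∈ Ico (0:ℝ) T, 0 < N t)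
    (hM : ∀ t ∈ Ico (0:ℝ) T, HasDerivAt M (M' t) t)
    (hM' : ∀ t ∈ Ico (0:ℝ) T, M' t ≤ -(M t) ^ 2 + δ * N t)
    (hN : ∀ t ∈ Ico (0:ℝ) T, HasDerivAt N (-(M t * N t)) t)
    (hM0 : M 0 < -Real.sqrt (2 * δ * N 0))
    (hT₁ : T₁ = -((M 0 + Real.sqrt ((M 0) ^ 2 - 2 * δ * N 0)) / (δ * N 0))) :
    (∀ t ∈ Ico (0:ℝ) T, t < T₁) ∧ T ≤ T₁ := by
  have h0mem : (0:ℝ) ∈ Ico (0:ℝ) T := ⟨le_refl 0, hT⟩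
  have hN0 : 0 < N 0 := hNpos 0 h0mem
  -- Step A: M t / N t ≤ M 0 / N 0 + δ t
  have stepA : ∀ t ∈ Ico (0:ℝ) T, M t / N t ≤ M 0 / N 0 + δ * t := by
    have h := riccati_aux_antitone hT (fun t => M t / N t - δ * t)
      (fun t => (M' t * N t - M t * (-(M t * N t))) / (N t)^2 - δ)
      (fun t ht => by
        have h1 := ((hM t ht).div (hN t ht) (hNpos t ht).ne').sub
          ((hasDerivAt_id t).const_mul δ)
        exact h1.congr_deriv (by ring))
      (fun t ht => by
        have hNt := hNpos t ht
        have hMt := hM' t ht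
        rw [sub_nonpos, div_le_iff₀ (by positivity : (0:ℝ) < (N t)^2)]
        nlinarith)
    intro t ht
    have := h t ht
    simp only [mul_zero, sub_zero] at this
    linarith
  -- Step B: 1/N t ≤ 1/N 0 + (M 0 / N 0) t + δ t²/2
  have stepB : ∀ t ∈ Ico (0:ℝ) T,
      (N t)⁻¹ ≤ (N 0)⁻¹ + (M 0 / N 0) * t + δ * t^2 / 2 := by
    have h := riccati_aux_antitone hT
      (fun t => (N t)⁻¹ - (M 0 / N 0) * t - δ * t^2 / 2)
      (fun t => M t / N t - (M 0 / N 0 + δ * t))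
      (fun t ht => by
        have hNt := (hNpos t ht).ne'
        have h1 : HasDerivAt (fun t => (N t)⁻¹ - (M 0 / N 0) * t - δ * t^2 / 2)
            (-(-(M t * N t)) / (N t)^2 - (M 0 / N 0) * 1 - δ * (2 * t ^ 1) / 2) t := by
          exact (((hN t ht).inv hNt).sub ((hasDerivAt_id t).const_mul (M 0 / N 0))).sub
            (((hasDerivAt_pow 2 t).const_mul δ).div_const 2)
        convert h1 using 1
        field_simp
        ring)
      (fun t ht => by
        have := stepA t ht
        linarith)
    intro t ht
    have := h t ht
    simp only [mul_zero, sub_zero, ne_eq, OfNat.ofNat_ne_zero, not_false_eq_true,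
      zero_pow, zero_div] at this
    linarith
  -- key quadratic positivity
  have key : ∀ t ∈ Ico (0:ℝ) T, 0 < 2 + 2 * M 0 * t + δ * N 0 * t^2 := by
    intro t ht
    have h1 : 0 < (N t)⁻¹ := inv_pos.mpr (hNpos t ht)
    have h2 := stepB t ht
    have h3 : 0 < (N 0)⁻¹ + (M 0 / N 0) * t + δ * t^2 / 2 := lt_of_lt_of_le h1 h2
    have h4 : 2 * N 0 * ((N 0)⁻¹ + (M 0 / N 0) * t + δ * t^2 / 2)
        = 2 + 2 * M 0 * t + δ * N 0 * t^2 := by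
      field_simp
    nlinarith
  -- facts about T₁
  set s := Real.sqrt ((M 0) ^ 2 - 2 * δ * N 0) with hs
  have hsq0 : Real.sqrt (2 * δ * N 0) < -M 0 := by linarith
  have hsqrtnn : 0 ≤ Real.sqrt (2 * δ * N 0) := Real.sqrt_nonneg _
  have hsqsq : Real.sqrt (2 * δ * N 0) ^ 2 = 2 * δ * N 0 :=
    Real.sq_sqrt (by positivity)
  have hdisc : 0 < (M 0) ^ 2 - 2 * δ * N 0 := by nlinarith
  have hs2 : s ^ 2 = (M 0) ^ 2 - 2 * δ * N 0 := Real.sq_sqrt hdisc.le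
  have hsnn : 0 ≤ s := Real.sqrt_nonneg _
  have hM0neg : M 0 < 0 := by linarith
  have hslt : s < -M 0 := by nlinarith
  have hδN : (0:ℝ) < δ * N 0 := by positivity
  have hT₁pos : 0 < T₁ := by
    rw [hT₁, ← neg_div]
    exact div_pos (by linarith) hδN
  have hq0 : 2 + 2 * M 0 * T₁ + δ * N 0 * T₁^2 = 0 := by
    rw [hT₁]
    field_simp
    nlinarith [hs2]
  constructor
  · intro t ht
    by_contra h
    push_neg at h
    have hT₁mem : T₁ ∈ Ico (0:ℝ) T := ⟨hT₁pos.le, lt_of_le_of_lt h ht.2⟩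
    have := key T₁ hT₁mem
    linarith
  · by_contra h
    push_neg at h
    have hT₁mem : T₁ ∈ Ico (0:ℝ) T := ⟨hT₁pos.le, h⟩
    have := key T₁ hT₁mem
    linarith
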